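/- arXiv:2503.00772 — 3 statements merged into one kernel-verified Lean document; each statement's English description precedes it below -/
import Mathlib

section
/- For the quantile loss function q_τ(u) = u(τ - 1{u ≤ 0}), the identity q_τ(u - v) - q_τ(u) = -v(τ - 1{u ≤ 0}) + ∫_0^v (1{u ≤ s} - 1{u ≤ 0}) ds (Knight's identity) holds for all real u, v. -/
open MeasureTheory intervalIntegral

lemma step_integrable (u a b : ℝ) :
    IntervalIntegrable (fun s => if u ≤ s then (1:ℝ) else 0) volume a b := by
  have heq : (fun s => if u ≤ s then (1:ℝ) else 0)
      = Set.indicator (Set.Ici u) (fun _ => 1) := by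
    ext s; simp [Set.indicator, Set.mem_Ici]
  rw [heq, intervalIntegrable_iff]
  exact ((integrableOn_const_iff (C := (1:ℝ)) (by simp)).mpr (Or.inr measure_Ioc_lt_top)).indicator measurableSet_Ici

lemma step_integral (u v : ℝ) :
    ∫ s in (0:ℝ)..v, (if u ≤ s then (1:ℝ) else 0) = max (v - u) 0 - max (-u) 0 := by
  have hae : ∀ᵐ s : ℝ ∂volume, s ≠ u := by
    rw [ae_iff]
    simpa using measure_singleton (α := ℝ) (μ := volume) u
  have hsplit := intervalIntegral.integral_add_adjacent_intervals
    (step_integrable u 0 u) (step_integrable u u v)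
  have h1 : (∫ s in (0:ℝ)..u, (if u ≤ s then (1:ℝ) else 0)) = - max (-u) 0 := by
    rcases le_or_gt u 0 with hu | hu
    · rw [intervalIntegral.integral_congr (g := fun _ => (1:ℝ))]
      · rw [intervalIntegral.integral_const, max_eq_left (by linarith)]
        ring_nf
      · intro s hs
        have h := (Set.mem_Icc.mp hs).1
        have : u ≤ s := le_trans (le_min hu le_rfl) h
        simp [this]
    · rw [intervalIntegral.integral_zero_ae, max_eq_right (by linarith)]
      · ring
      · filter_upwards [hae] with s hs hmem
        rcases Set.mem_uIoc.mp hmem with ⟨_, h⟩ | ⟨h1, h2⟩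
        · have : s < u := lt_of_le_of_ne h hs
          simp [not_le.mpr this]
        · linarith
  have h2 : (∫ s in u..v, (if u ≤ s then (1:ℝ) else 0)) = max (v - u) 0 := by
    rcases le_or_gt u v with huv | huv
    · rw [intervalIntegral.integral_congr (g := fun _ => (1:ℝ))]
      · rw [intervalIntegral.integral_const, max_eq_left (by linarith)]
        simp
      · intro s hs
        have h := (Set.mem_Icc.mp hs).1
        have : u ≤ s := le_trans (le_min le_rfl huv) h
        simp [this]
    · rw [intervalIntegral.integral_zero_ae, max_eq_right (by linarith)]
      filter_upwards [hae] with s hs hmem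
      rcases Set.mem_uIoc.mp hmem with ⟨h1, h2⟩ | ⟨_, h⟩
      · linarith
      · have : s < u := lt_of_le_of_ne h hs
        simp [not_le.mpr this]
  rw [← hsplit, h1, h2]; ring


/-- The quantile (check) loss function `q_τ(u) = u(τ - 1{u ≤ 0})`. -/
noncomputable def quantileLoss (τ : ℝ) (u : ℝ) : ℝ := u * (τ - if u ≤ 0 then 1 else 0)

/-- Knight's identity:
`q_τ(u - v) - q_τ(u) = -v(τ - 1{u ≤ 0}) + ∫_0^v (1{u ≤ s} - 1{u ≤ 0}) ds`. -/
theorem knight_identity (τ : ℝ) (hτ : τ ∈ Set.Ioo (0:ℝ) 1) (u v : ℝ) :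
    quantileLoss τ (u - v) - quantileLoss τ u =
      -v * (τ - if u ≤ 0 then 1 else 0) +
        ∫ s in (0:ℝ)..v,
          ((if u ≤ s then (1:ℝ) else 0) - (if u ≤ 0 then (1:ℝ) else 0)) := by
  rw [intervalIntegral.integral_sub (step_integrable u 0 v)
    (intervalIntegrable_const (μ := volume)), step_integral,
    intervalIntegral.integral_const]
  have hm1 : max (v - u) 0 = if u - v ≤ 0 then v - u else 0 := by
    split_ifs with h
    · exact max_eq_left (by linarith)
    · exact max_eq_right (by linarith)
  have hm2 : max (-u) 0 = if u ≤ 0 then -u else 0 := by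
    split_ifs with h
    · exact max_eq_left (by linarith)
    · exact max_eq_right (by linarith)
  rw [hm1, hm2]
  simp only [quantileLoss, smul_eq_mul, sub_zero]
  split_ifs <;> ring
end

section
/- If a real random variable ε satisfies P(ε ≤ 0) = τ and its density g is bounded below by g̲ > 0 on the interval [-c, c], then for all |v| ≤ c, E[q_τ(ε - v) - q_τ(ε)] ≥ (g̲/2) v². -/
open MeasureTheory
open scoped ENNReal NNReal

lemma quantileLoss_diff (τ v u : ℝ) :
    quantileLoss τ (u - v) - quantileLoss τ u
      = -(τ * v) + (max (v - u) 0 - max (-u) 0) := by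
  unfold quantileLoss
  rcases le_or_gt u 0 with h1 | h1 <;> rcases le_or_gt (u - v) 0 with h2 | h2
  · rw [if_pos h1, if_pos h2, max_eq_left (by linarith), max_eq_left (by linarith)]
    ring
  · rw [if_pos h1, if_neg (not_le.2 h2), max_eq_right (by linarith), max_eq_left (by linarith)]
    ring
  · rw [if_neg (not_le.2 h1), if_pos h2, max_eq_left (by linarith), max_eq_right (by linarith)]
    ring
  · rw [if_neg (not_le.2 h1), if_neg (not_le.2 h2), max_eq_right (by linarith),
      max_eq_right (by linarith)]
    ring

/-- If `P(ε ≤ 0) = τ` and the density `g` of `ε` is bounded below by `g̲ > 0` on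
`[-c, c]`, then for all `|v| ≤ c`, `E[q_τ(ε - v) - q_τ(ε)] ≥ (g̲/2) v²`. -/
theorem check_loss_quadratic_lower_bound
    {Ω : Type*} [MeasurableSpace Ω] (μ : Measure Ω) [IsProbabilityMeasure μ]
    (τ : ℝ) (hτ : τ ∈ Set.Ioo (0:ℝ) 1)
    (ε : Ω → ℝ) (hmeas : Measurable ε) (hint : Integrable ε μ)
    (g : ℝ → ℝ) (hg_meas : Measurable g) (hg_nonneg : ∀ s, 0 ≤ g s)
    (hdens : Measure.map ε μ =
      MeasureTheory.volume.withDensity fun s => ENNReal.ofReal (g s))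
    (c gbar : ℝ) (hc : 0 < c) (hgbar : 0 < gbar)
    (hlb : ∀ s ∈ Set.Icc (-c) c, gbar ≤ g s)
    (hτ0 : μ {ω | ε ω ≤ 0} = ENNReal.ofReal τ) :
    ∀ v : ℝ, |v| ≤ c →
      gbar / 2 * v ^ 2 ≤ ∫ ω, (quantileLoss τ (ε ω - v) - quantileLoss τ (ε ω)) ∂μ := by
  intro v hv
  -- the "remainder" function
  set R : ℝ → ℝ := fun u =>
      max (v - u) 0 - max (-u) 0 - v * (if u ≤ 0 then 1 else 0) with hRdef
  have hItem : Measurable fun u : ℝ => (if u ≤ 0 then (1:ℝ) else 0) := by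
    have : (fun u : ℝ => (if u ≤ 0 then (1:ℝ) else 0))
        = Set.indicator (Set.Iic (0:ℝ)) (fun _ => 1) := by
      funext u; simp [Set.indicator_apply]
    rw [this]
    exact (measurable_const.indicator measurableSet_Iic)
  have hRmeas : Measurable R := by
    exact (((measurable_const.sub measurable_id).max measurable_const).sub
      ((measurable_id.neg).max measurable_const)).sub (measurable_const.mul hItem)
  -- R is bounded
  have hRbdd : ∀ u, |R u| ≤ 2 * |v| := by
    intro u
    have h1 : |max (v - u) 0 - max (-u) 0| ≤ |v| := by
      have := abs_max_sub_max_le_abs (v - u) (-u) 0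
      simpa using this
    have h2 : |v * (if u ≤ 0 then 1 else 0)| ≤ |v| := by
      split_ifs <;> simp [abs_nonneg]
    calc |R u| ≤ |max (v - u) 0 - max (-u) 0| + |v * (if u ≤ 0 then 1 else 0)| :=
          abs_sub _ _
      _ ≤ |v| + |v| := add_le_add h1 h2
      _ = 2 * |v| := by ring
  -- integrability of the pieces on Ω
  have hIint : Integrable (fun ω => v * (if ε ω ≤ 0 then (1:ℝ) else 0)) μ := by
    apply Integrable.mono' (integrable_const (|v|))
    · exact (measurable_const.mul (hItem.comp hmeas)).aestronglyMeasurable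
    · refine ae_of_all _ fun ω => ?_
      split_ifs <;> simp [abs_nonneg]
  have hRint : Integrable (fun ω => R (ε ω)) μ := by
    apply Integrable.mono' (integrable_const (2 * |v|))
    · exact (hRmeas.comp hmeas).aestronglyMeasurable
    · exact ae_of_all _ fun ω => hRbdd (ε ω)
  -- integral of the indicator part
  have hIval : ∫ ω, v * (if ε ω ≤ 0 then (1:ℝ) else 0) ∂μ = τ * v := by
    have hs : MeasurableSet {ω | ε ω ≤ 0} := hmeas measurableSet_Iic
    have : (fun ω => v * (if ε ω ≤ 0 then (1:ℝ) else 0))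
        = Set.indicator {ω | ε ω ≤ 0} (fun _ => v) := by
      funext ω
      by_cases h : ε ω ≤ 0 <;> simp [Set.indicator_apply, h]
    rw [this, integral_indicator_const _ hs, measureReal_def, hτ0, ENNReal.toReal_ofReal hτ.1.le]
    simp [mul_comm]
  -- g integrates to 1, hence is integrable
  have hprob : IsProbabilityMeasure
      (MeasureTheory.volume.withDensity fun s => ENNReal.ofReal (g s)) := by
    rw [← hdens]; exact Measure.isProbabilityMeasure_map hmeas.aemeasurable
  have hgl : ∫⁻ s, ENNReal.ofReal (g s) = 1 := by
    have := hprob.measure_univ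
    rwa [withDensity_apply _ MeasurableSet.univ, setLIntegral_univ] at this
  have hgint : Integrable g := by
    refine ⟨hg_meas.aestronglyMeasurable, ?_⟩
    rw [hasFiniteIntegral_iff_norm]
    have : ∀ s, ENNReal.ofReal ‖g s‖ = ENNReal.ofReal (g s) := fun s => by
      rw [Real.norm_of_nonneg (hg_nonneg s)]
    simp only [this, hgl]
    exact ENNReal.one_lt_top
  -- change of variables
  have hcov : ∫ ω, R (ε ω) ∂μ = ∫ s, g s * R s := by
    rw [← integral_map hmeas.aemeasurable hRmeas.aestronglyMeasurable, hdens]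
    have : (fun s => ENNReal.ofReal (g s)) = (fun s => ((g s).toNNReal : ℝ≥0∞)) := rfl
    rw [this, integral_withDensity_eq_integral_smul
      (by exact hg_meas.real_toNNReal) R]
    congr 1
    funext s
    rw [NNReal.smul_def, Real.coe_toNNReal _ (hg_nonneg s), smul_eq_mul]
  have hgRint : Integrable (fun s => g s * R s) := by
    apply Integrable.mono' (hgint.const_mul (2 * |v|))
    · exact (hg_meas.mul hRmeas).aestronglyMeasurable
    · refine ae_of_all _ fun s => ?_
      rw [Real.norm_eq_abs, abs_mul, abs_of_nonneg (hg_nonneg s), mul_comm (2 * |v|)]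
      exact mul_le_mul_of_nonneg_left (hRbdd s) (hg_nonneg s)
  -- identity for the whole integral
  have hmain : ∫ ω, (quantileLoss τ (ε ω - v) - quantileLoss τ (ε ω)) ∂μ
      = ∫ s, g s * R s := by
    have h1 : ∫ ω, (quantileLoss τ (ε ω - v) - quantileLoss τ (ε ω)) ∂μ
        = ∫ ω, (-(τ * v) + (v * (if ε ω ≤ 0 then 1 else 0) + R (ε ω))) ∂μ := by
      refine integral_congr_ae (ae_of_all _ fun ω => ?_)
      show quantileLoss τ (ε ω - v) - quantileLoss τ (ε ω) = _
      rw [quantileLoss_diff τ v (ε ω)]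
      simp only [hRdef]
      ring
    have hsum : Integrable (fun ω => v * (if ε ω ≤ 0 then (1:ℝ) else 0) + R (ε ω)) μ :=
      hIint.add hRint
    rw [h1, integral_add (integrable_const _) hsum,
      integral_add hIint hRint, hIval, integral_const, hcov]
    simp
  rw [hmain]
  -- lower bound via the indicator comparison
  rcases le_or_gt 0 v with hv0 | hv0
  · have hvc : v ≤ c := by rwa [abs_of_nonneg hv0] at hv
    have hle : ∀ s, Set.indicator (Set.Ioc 0 v) (fun u => gbar * (v - u)) s ≤ g s * R s := by
      intro s
      by_cases hs : s ∈ Set.Ioc 0 v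
      · rw [Set.indicator_of_mem hs]
        obtain ⟨hs1, hs2⟩ := hs
        have hR : R s = v - s := by
          simp only [hRdef]
          rw [if_neg (not_le.2 hs1), max_eq_left (by linarith), max_eq_right (by linarith)]
          ring
        rw [hR]
        exact mul_le_mul_of_nonneg_right
          (hlb s ⟨by linarith, by linarith⟩) (by linarith)
      · rw [Set.indicator_of_notMem hs]
        have hR : R s = 0 := by
          simp only [hRdef]
          rcases le_or_gt s 0 with h | h
          · rw [if_pos h, max_eq_left (by linarith), max_eq_left (by linarith)]; ring
          · have hsv : v < s := by
              by_contra hsv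
              exact hs ⟨h, not_lt.1 hsv⟩
            rw [if_neg (not_le.2 h), max_eq_right (by linarith), max_eq_right (by linarith)]
            ring
        rw [hR, mul_zero]
    have hindint : Integrable (Set.indicator (Set.Ioc 0 v) (fun u => gbar * (v - u))) := by
      rw [integrable_indicator_iff measurableSet_Ioc]
      exact (continuous_const.mul (continuous_const.sub continuous_id)).integrableOn_Ioc
    have hval : ∫ s, Set.indicator (Set.Ioc 0 v) (fun u => gbar * (v - u)) s
        = gbar / 2 * v ^ 2 := by
      rw [integral_indicator measurableSet_Ioc, ← intervalIntegral.integral_of_le hv0,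
        intervalIntegral.integral_const_mul,
        intervalIntegral.integral_sub intervalIntegrable_const intervalIntegral.intervalIntegrable_id,
        intervalIntegral.integral_const, integral_id]
      simp; ring
    calc gbar / 2 * v ^ 2
        = ∫ s, Set.indicator (Set.Ioc 0 v) (fun u => gbar * (v - u)) s := hval.symm
      _ ≤ ∫ s, g s * R s := integral_mono hindint hgRint hle
  · have hvc : -c ≤ v := by
      have := abs_of_neg hv0 ▸ hv; linarith
    have hle : ∀ s, Set.indicator (Set.Ioc v 0) (fun u => gbar * (u - v)) s ≤ g s * R s := by
      intro s
      by_cases hs : s ∈ Set.Ioc v 0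
      · rw [Set.indicator_of_mem hs]
        obtain ⟨hs1, hs2⟩ := hs
        have hR : R s = s - v := by
          simp only [hRdef]
          rw [if_pos hs2, max_eq_right (by linarith), max_eq_left (by linarith)]
          ring
        rw [hR]
        exact mul_le_mul_of_nonneg_right
          (hlb s ⟨by linarith, by linarith⟩) (by linarith)
      · rw [Set.indicator_of_notMem hs]
        have hR : R s = 0 := by
          simp only [hRdef]
          rcases le_or_gt s 0 with h | h
          · have hsv : s ≤ v := by
              by_contra hsv
              exact hs ⟨not_le.1 hsv, h⟩
            rw [if_pos h, max_eq_left (by linarith), max_eq_left (by linarith)]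
            ring
          · rw [if_neg (not_le.2 h), max_eq_right (by linarith), max_eq_right (by linarith)]
            ring
        rw [hR, mul_zero]
    have hindint : Integrable (Set.indicator (Set.Ioc v 0) (fun u => gbar * (u - v))) := by
      rw [integrable_indicator_iff measurableSet_Ioc]
      exact (continuous_const.mul (continuous_id.sub continuous_const)).integrableOn_Ioc
    have hval : ∫ s, Set.indicator (Set.Ioc v 0) (fun u => gbar * (u - v)) s
        = gbar / 2 * v ^ 2 := by
      rw [integral_indicator measurableSet_Ioc, ← intervalIntegral.integral_of_le hv0.le,
        intervalIntegral.integral_const_mul,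
        intervalIntegral.integral_sub intervalIntegral.intervalIntegrable_id intervalIntegrable_const,
        intervalIntegral.integral_const, integral_id]
      simp; ring
    calc gbar / 2 * v ^ 2
        = ∫ s, Set.indicator (Set.Ioc v 0) (fun u => gbar * (u - v)) s := hval.symm
      _ ≤ ∫ s, g s * R s := integral_mono hindint hgRint hle
end

section
/- Let F and F̂ be T×r matrices with FᵀF/T = F̂ᵀF̂/T = I_r, and let Λ, Λ̂ be N×r matrices. If (1/(NT))‖Λ̂F̂ᵀ - ΛFᵀ‖² ≤ δ², then (1/T)‖(I - P_{F̂})F‖²_F · λ_min(ΛᵀΛ/N) ≤ δ², where P_{F̂} = F̂F̂ᵀ/T is the projection onto the column space of F̂ and λ_min denotes the smallest eigenvalue. -/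
open Matrix

attribute [local instance] Matrix.frobeniusNormedAddCommGroup

lemma norm_sq_eq_trace {m n : ℕ} (A : Matrix (Fin m) (Fin n) ℝ) :
    ‖A‖ ^ 2 = (Aᵀ * A).trace := by
  have h : (0:ℝ) ≤ ∑ i, ∑ j, ‖A i j‖ ^ (2:ℝ) := by positivity
  rw [frobenius_norm_def, ← Real.rpow_natCast _ 2, ← Real.rpow_mul h]
  norm_num
  rw [Matrix.trace, Finset.sum_comm]
  simp [Matrix.diag, Matrix.mul_apply, Real.rpow_natCast, Real.norm_eq_abs, sq_abs, pow_two]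

lemma trace_nonneg_of_psd {n : ℕ} {A : Matrix (Fin n) (Fin n) ℝ} (h : A.PosSemidef) :
    0 ≤ A.trace := by
  rw [Matrix.trace]
  refine Finset.sum_nonneg fun i _ => ?_
  exact h.diag_nonneg

lemma psd_sub_smul_one {n : ℕ} {A : Matrix (Fin n) (Fin n) ℝ} (hA : A.IsHermitian) {c : ℝ}
    (hc : ∀ i, c ≤ hA.eigenvalues i) : (A - c • 1).PosSemidef := by
  set U : Matrix (Fin n) (Fin n) ℝ := (hA.eigenvectorUnitary : Matrix (Fin n) (Fin n) ℝ)
  have hU : U * star U = 1 := (Matrix.mem_unitaryGroup_iff).mp hA.eigenvectorUnitary.2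
  have h1 : (c • (1 : Matrix (Fin n) (Fin n) ℝ)) = U * (c • 1) * star U := by
    rw [mul_smul_comm, mul_one, smul_mul_assoc, hU]
  have key : A - c • 1 =
      U * (diagonal (fun i => hA.eigenvalues i - c)) * star U := by
    conv_lhs => rw [hA.spectral_theorem, h1]
    rw [Unitary.conjStarAlgAut_apply, ← sub_mul, ← mul_sub]
    congr 2
    rw [smul_one_eq_diagonal, diagonal_sub]
    norm_num [Function.comp]
  rw [key, Matrix.star_eq_conjTranspose]
  exact (Matrix.PosSemidef.diagonal fun i => sub_nonneg.2 (hc i)).mul_mul_conjTranspose_same U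

/-- If `FᵀF/T = F̂ᵀF̂/T = I_r` and `(1/(NT))‖Λ̂F̂ᵀ - ΛFᵀ‖² ≤ δ²` (Frobenius norm),
then `(1/T)‖(I - P_{F̂})F‖² λ_min(ΛᵀΛ/N) ≤ δ²`, where `P_{F̂} = F̂F̂ᵀ/T`. -/
theorem factor_space_consistency {T N r : ℕ} (hT : 0 < T) (hN : 0 < N) (hr : 0 < r)
    (F Fhat : Matrix (Fin T) (Fin r) ℝ) (Λ Λhat : Matrix (Fin N) (Fin r) ℝ)
    (hF : Fᵀ * F = (T : ℝ) • (1 : Matrix (Fin r) (Fin r) ℝ))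
    (hFhat : Fhatᵀ * Fhat = (T : ℝ) • (1 : Matrix (Fin r) (Fin r) ℝ))
    (δ : ℝ)
    (hδ : (1 / ((N : ℝ) * T)) * ‖Λhat * Fhatᵀ - Λ * Fᵀ‖ ^ 2 ≤ δ ^ 2)
    (hH : (((N : ℝ)⁻¹) • (Λᵀ * Λ)).IsHermitian) :
    (1 / (T : ℝ)) *
        ‖((1 : Matrix (Fin T) (Fin T) ℝ) - ((T : ℝ)⁻¹) • (Fhat * Fhatᵀ)) * F‖ ^ 2 *
        (⨅ i : Fin r, hH.eigenvalues i) ≤ δ ^ 2 := by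
  have hT0 : (T:ℝ) ≠ 0 := Nat.cast_ne_zero.mpr hT.ne'
  have hN0 : (N:ℝ) ≠ 0 := Nat.cast_ne_zero.mpr hN.ne'
  set P : Matrix (Fin T) (Fin T) ℝ := (T:ℝ)⁻¹ • (Fhat * Fhatᵀ) with hPdef
  set Q : Matrix (Fin T) (Fin T) ℝ := 1 - P with hQdef
  set M : Matrix (Fin N) (Fin T) ℝ := Λhat * Fhatᵀ - Λ * Fᵀ with hMdef
  set S : Matrix (Fin r) (Fin r) ℝ := (N:ℝ)⁻¹ • (Λᵀ * Λ) with hSdef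
  set B : Matrix (Fin T) (Fin r) ℝ := Q * F with hBdef
  set c : ℝ := ⨅ i, hH.eigenvalues i with hcdef
  clear_value P Q M S B c
  -- Q annihilates Fhat
  have hQF : Q * Fhat = 0 := by
    rw [hQdef, Matrix.sub_mul, Matrix.one_mul, hPdef, Matrix.smul_mul, Matrix.mul_assoc, hFhat,
      Matrix.mul_smul, Matrix.mul_one, smul_smul, inv_mul_cancel₀ hT0, one_smul, sub_self]
  have hQsymm : Qᵀ = Q := by
    rw [hQdef, transpose_sub, transpose_one, hPdef, transpose_smul, transpose_mul,
      transpose_transpose]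
  have hPP : P * P = P := by
    have h2 : (Fhat * Fhatᵀ) * (Fhat * Fhatᵀ) = (T:ℝ) • (Fhat * Fhatᵀ) := by
      rw [Matrix.mul_assoc, ← Matrix.mul_assoc Fhatᵀ, hFhat, Matrix.smul_mul, Matrix.one_mul,
        Matrix.mul_smul]
    rw [hPdef, Matrix.smul_mul, Matrix.mul_smul, h2, smul_smul, smul_smul,
      mul_assoc, inv_mul_cancel₀ hT0, mul_one]
  have hQQ : Q * Q = Q := by
    have h3 : (1 - P) * (1 - P) = 1 - P - P + P * P := by noncomm_ring
    rw [hQdef, h3, hPP]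
    abel
  -- Q Mᵀ = -(B Λᵀ)
  have hBL : Q * Mᵀ = -(B * Λᵀ) := by
    rw [hBdef, hMdef, transpose_sub, transpose_mul, transpose_mul, transpose_transpose,
      transpose_transpose, Matrix.mul_sub, ← Matrix.mul_assoc, hQF, Matrix.zero_mul, zero_sub,
      Matrix.mul_assoc]
  -- eigenvalue bound
  have hc' : ∀ i, c ≤ hH.eigenvalues i := fun i => hcdef ▸ ciInf_le (Finite.bddBelow_range _) i
  -- step A : c * trace(B Bᵀ) ≤ trace(B S Bᵀ)
  have hA1 : (B * (S - c • 1) * Bᵀ).PosSemidef := by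
    have := (psd_sub_smul_one hH hc').mul_mul_conjTranspose_same B
    rwa [conjTranspose_eq_transpose_of_trivial] at this
  have hsplit : B * (S - c • 1) * Bᵀ = B * S * Bᵀ - c • (B * Bᵀ) := by
    rw [Matrix.mul_sub, Matrix.sub_mul, Matrix.mul_smul, Matrix.mul_one, Matrix.smul_mul]
  have stepA : c * (B * Bᵀ).trace ≤ (B * S * Bᵀ).trace := by
    have h0 := trace_nonneg_of_psd hA1
    rw [hsplit, trace_sub, trace_smul, smul_eq_mul, sub_nonneg] at h0
    exact h0
  -- trace(B S Bᵀ) = N⁻¹ ‖Λ Bᵀ‖²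
  have hBSB : (B * S * Bᵀ).trace = (N:ℝ)⁻¹ * ‖Λ * Bᵀ‖ ^ 2 := by
    have h4 : B * S * Bᵀ = (N:ℝ)⁻¹ • ((Λ * Bᵀ)ᵀ * (Λ * Bᵀ)) := by
      rw [hSdef, Matrix.mul_smul, Matrix.smul_mul, transpose_mul, transpose_transpose]
      congr 1
      rw [Matrix.mul_assoc, Matrix.mul_assoc, Matrix.mul_assoc]
    rw [h4, trace_smul, smul_eq_mul, norm_sq_eq_trace]
  -- ‖Λ Bᵀ‖ = ‖Q Mᵀ‖
  have hnorm1 : ‖Λ * Bᵀ‖ = ‖Q * Mᵀ‖ := by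
    rw [hBL, norm_neg, ← frobenius_norm_transpose (Λ * Bᵀ), transpose_mul, transpose_transpose]
  -- ‖Q Mᵀ‖² ≤ ‖M‖²
  have hcontr : ‖Q * Mᵀ‖ ^ 2 ≤ ‖M‖ ^ 2 := by
    have e1 : ‖Q * Mᵀ‖ ^ 2 = (M * Q * Mᵀ).trace := by
      rw [norm_sq_eq_trace, transpose_mul, transpose_transpose, hQsymm, Matrix.mul_assoc,
        ← Matrix.mul_assoc Q Q, hQQ, ← Matrix.mul_assoc]
    have e2 : ‖M‖ ^ 2 = (M * Mᵀ).trace := by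
      rw [← frobenius_norm_transpose M, norm_sq_eq_trace, transpose_transpose]
    have e3 : M * Mᵀ - M * Q * Mᵀ = (T:ℝ)⁻¹ • ((M * Fhat) * (M * Fhat)ᵀ) := by
      rw [hQdef, Matrix.mul_sub, Matrix.mul_one, Matrix.sub_mul, sub_sub_cancel, hPdef,
        Matrix.mul_smul, Matrix.smul_mul, transpose_mul]
      congr 1
      rw [Matrix.mul_assoc, Matrix.mul_assoc, Matrix.mul_assoc]
    have e4 : 0 ≤ (M * Mᵀ).trace - (M * Q * Mᵀ).trace := by
      rw [← trace_sub, e3, trace_smul, smul_eq_mul]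
      have h5 : 0 ≤ ((M * Fhat) * (M * Fhat)ᵀ).trace := by
        rw [trace_mul_comm, ← norm_sq_eq_trace]
        positivity
      positivity
    rw [e1, e2]; linarith
  -- combine
  have key : ‖B‖ ^ 2 * c ≤ (N:ℝ)⁻¹ * ‖M‖ ^ 2 := by
    have h1 : ‖B‖ ^ 2 * c = c * (B * Bᵀ).trace := by
      rw [norm_sq_eq_trace, trace_mul_comm, mul_comm]
    have h2 : (N:ℝ)⁻¹ * ‖Λ * Bᵀ‖ ^ 2 ≤ (N:ℝ)⁻¹ * ‖M‖ ^ 2 := by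
      rw [hnorm1]
      exact mul_le_mul_of_nonneg_left hcontr (by positivity)
    calc ‖B‖ ^ 2 * c = c * (B * Bᵀ).trace := h1
      _ ≤ (B * S * Bᵀ).trace := stepA
      _ = (N:ℝ)⁻¹ * ‖Λ * Bᵀ‖ ^ 2 := hBSB
      _ ≤ (N:ℝ)⁻¹ * ‖M‖ ^ 2 := h2
  have hfin : (1 / (T:ℝ)) * ‖B‖ ^ 2 * c ≤ (1 / ((N:ℝ) * T)) * ‖M‖ ^ 2 := by
    have h6 := mul_le_mul_of_nonneg_left key (le_of_lt (by positivity : (0:ℝ) < (T:ℝ)⁻¹))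
    have h7 : (1 / ((N:ℝ) * T)) = (N:ℝ)⁻¹ * (T:ℝ)⁻¹ := by
      rw [one_div, mul_inv, mul_comm]
    calc (1 / (T:ℝ)) * ‖B‖ ^ 2 * c = (T:ℝ)⁻¹ * (‖B‖ ^ 2 * c) := by ring
      _ ≤ (T:ℝ)⁻¹ * ((N:ℝ)⁻¹ * ‖M‖ ^ 2) := h6
      _ = (1 / ((N:ℝ) * T)) * ‖M‖ ^ 2 := by rw [h7]; ring
  exact hfin.trans hδ
end
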